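/- Let E be a real Hilbert space, f : E → ℝ twice continuously differentiable, and define the Hamiltonian H(x) = (1/2)·‖∇f(x)‖². Suppose H is differentiable and satisfies the PL condition with constant δ > 0: (1/2)·‖∇H(x)‖² ≥ δ·H(x) for all x. Fix r₁ ∈ (0,1) and c > 0. Let (p_t) ⊆ E, directions (ξ_t) ⊆ E and positive stepsizes (η_t) satisfy p_{t+1} = p_t + η_t·ξ_t together with, for every t: (a) the Armijo condition H(p_{t+1}) − H(p_t) ≤ r₁·η_t·⟨∇H(p_t), ξ_t⟩, and (b) the sufficient-descent condition ⟨ξ_t, −∇H(p_t)⟩ ≥ c·‖∇H(p_t)‖². Let η̃ > 0 satisfy η̃ ≤ η_i for all i. Then for every t ∈ ℕ, ‖∇f(p_t)‖² ≤ (1 − 2·r₁·η̃·c·δ)^t · ‖∇f(p_0)‖². -/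
import Mathlib


open scoped InnerProductSpace

theorem hamiltonian_cg_linear_convergence
    {E : Type*} [NormedAddCommGroup E] [InnerProductSpace ℝ E] [CompleteSpace E]
    (f : E → ℝ) (hf : ContDiff ℝ 2 f)
    (H : E → ℝ) (hH : H = fun x => (1 / 2 : ℝ) * ‖gradient f x‖ ^ 2)
    (δ : ℝ) (hδ : 0 < δ)
    (hdiff : ∀ x : E, DifferentiableAt ℝ H x)
    (hPL : ∀ x : E, δ * H x ≤ (1 / 2 : ℝ) * ‖gradient H x‖ ^ 2)
    (r₁ : ℝ) (hr₁ : r₁ ∈ Set.Ioo (0 : ℝ) 1) (c : ℝ) (hc : 0 < c)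
    (p ξ : ℕ → E) (η : ℕ → ℝ) (hηpos : ∀ t : ℕ, 0 < η t)
    (hp : ∀ t : ℕ, p (t + 1) = p t + η t • ξ t)
    (harmijo : ∀ t : ℕ, H (p (t + 1)) - H (p t) ≤ r₁ * η t * ⟪gradient H (p t), ξ t⟫_ℝ)
    (hdesc : ∀ t : ℕ, c * ‖gradient H (p t)‖ ^ 2 ≤ ⟪ξ t, -gradient H (p t)⟫_ℝ)
    (ηtilde : ℝ) (hηtilde : 0 < ηtilde) (hηmin : ∀ i : ℕ, ηtilde ≤ η i) :
    ∀ t : ℕ, ‖gradient f (p t)‖ ^ 2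
      ≤ (1 - 2 * r₁ * ηtilde * c * δ) ^ t * ‖gradient f (p 0)‖ ^ 2 := by
  obtain ⟨hr₁0, hr₁1⟩ := hr₁
  set κ : ℝ := 1 - 2 * r₁ * ηtilde * c * δ with hκ
  have hHnn : ∀ x : E, 0 ≤ H x := by
    intro x; rw [hH]; positivity
  -- step inequality
  have hstep : ∀ t : ℕ, H (p (t + 1)) ≤ κ * H (p t) := by
    intro t
    have h1 := harmijo t
    have h2 := hdesc t
    have h3 := hPL (p t)
    have h4 := hηmin t
    have h5 := hηpos t
    have hip : ⟪gradient H (p t), ξ t⟫_ℝ ≤ -(c * ‖gradient H (p t)‖ ^ 2) := by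
      have : ⟪ξ t, -gradient H (p t)⟫_ℝ = -⟪gradient H (p t), ξ t⟫_ℝ := by
        rw [inner_neg_right, real_inner_comm]
      linarith [h2.trans_eq this]
    have hg2 : 2 * δ * H (p t) ≤ ‖gradient H (p t)‖ ^ 2 := by linarith
    have hHt := hHnn (p t)
    nlinarith [mul_le_mul_of_nonneg_left hip (by positivity : (0:ℝ) ≤ r₁ * η t),
      mul_le_mul_of_nonneg_left hg2 (by positivity : (0:ℝ) ≤ r₁ * c),
      mul_le_mul_of_nonneg_right (mul_le_mul_of_nonneg_left h4 hr₁0.le)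
        (mul_nonneg hc.le (by nlinarith : (0:ℝ) ≤ ‖gradient H (p t)‖ ^ 2))]
  have key : ∀ t : ℕ, H (p t) ≤ κ ^ t * H (p 0) := by
    rcases le_or_gt 0 κ with hκ0 | hκ0
    · intro t
      induction t with
      | zero => simp
      | succ n ih =>
        calc H (p (n + 1)) ≤ κ * H (p n) := hstep n
          _ ≤ κ * (κ ^ n * H (p 0)) := by nlinarith
          _ = κ ^ (n + 1) * H (p 0) := by ring
    · -- κ < 0 forces H (p 0) = 0 and then H (p t) = 0 for all t
      have h0 : H (p 0) = 0 := by
        have h1 := hstep 0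
        have := hHnn (p 1)
        have := hHnn (p 0)
        nlinarith
      have hall : ∀ t, H (p t) = 0 := by
        intro t
        induction t with
        | zero => exact h0
        | succ n ih =>
          have h1 := hstep n
          have := hHnn (p (n + 1))
          nlinarith [ih]
      intro t
      rw [hall t, hall 0]
      simp
  intro t
  have h := key t
  have h0 : H (p 0) = (1 / 2 : ℝ) * ‖gradient f (p 0)‖ ^ 2 := by rw [hH]
  have ht : H (p t) = (1 / 2 : ℝ) * ‖gradient f (p t)‖ ^ 2 := by rw [hH]
  rw [h0, ht] at h
  linarith
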